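/- Let R be a commutative ring, S a commutative ring extension of R, a ∈ Sⁿ a tuple, D : R → S a derivation, and A ⊆ R[X₁,...,Xₙ] a generating set of the ideal I(a/R) = {f ∈ R[X̄] : f(a) = 0}. If there exists b ∈ Sⁿ with τ(g)(a,b) = 0 for all g ∈ A (where τg = Σᵢ (∂g/∂Xᵢ)·Yᵢ + g^D), then there exists a unique derivation D' : R[a] → S extending D with D'(aᵢ) = bᵢ for all i. -/

import Mathlib

open MvPolynomial

/-- Applying `D : R → S` to each coefficient of a multivariate polynomial. -/
noncomputable def coeffMap {R S : Type*} [CommRing R] [CommRing S] {σ : Type*}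
    (D : R → S) (f : MvPolynomial σ R) : MvPolynomial σ S :=
  f.support.sum fun m => monomial m (D (coeff m f))

/-- `τ(g)(a,b) = ∑ i, (∂g/∂Xᵢ)(a) * bᵢ + g^D(a)` for `g` a polynomial over the
subring `R` of `S`, evaluated at tuples `a`, `b` from `S`. -/
noncomputable def tauEval {S : Type*} [CommRing S] (R : Subring S) {n : ℕ}
    (D : R → S) (g : MvPolynomial (Fin n) R) (a b : Fin n → S) : S :=
  (∑ i, eval₂ R.subtype a (pderiv i g) * b i) + eval a (coeffMap D g)

section Aux

variable {S : Type*} [CommRing S] (R : Subring S) {n : ℕ} (D : R → S) (a b : Fin n → S)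

lemma eval_coeffMap_support (g : MvPolynomial (Fin n) R) :
    eval a (coeffMap D g) =
      ∑ m ∈ g.support, D (coeff m g) * m.prod fun i k => a i ^ k := by
  rw [coeffMap, map_sum]
  refine Finset.sum_congr rfl fun m _ => ?_
  rw [eval_monomial]

lemma eval_coeffMap_eq (hD0 : D 0 = 0) (g : MvPolynomial (Fin n) R)
    (t : Finset ((Fin n) →₀ ℕ)) (ht : g.support ⊆ t) :
    eval a (coeffMap D g) = ∑ m ∈ t, D (coeff m g) * m.prod fun i k => a i ^ k := by
  rw [eval_coeffMap_support]
  refine Finset.sum_subset ht fun m _ hm => ?_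
  rw [notMem_support_iff] at hm
  rw [hm, hD0, zero_mul]

lemma E_add (hD0 : D 0 = 0) (hDadd : ∀ x y : R, D (x + y) = D x + D y)
    (f g : MvPolynomial (Fin n) R) :
    eval a (coeffMap D (f + g)) = eval a (coeffMap D f) + eval a (coeffMap D g) := by
  classical
  rw [eval_coeffMap_eq R D a hD0 (f + g) (f.support ∪ g.support) support_add,
    eval_coeffMap_eq R D a hD0 f (f.support ∪ g.support) Finset.subset_union_left,
    eval_coeffMap_eq R D a hD0 g (f.support ∪ g.support) Finset.subset_union_right,
    ← Finset.sum_add_distrib]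
  refine Finset.sum_congr rfl fun m _ => ?_
  rw [coeff_add, hDadd, add_mul]

lemma E_monomial (hD0 : D 0 = 0) (m : (Fin n) →₀ ℕ) (c : R) :
    eval a (coeffMap D (monomial m c)) = D c * m.prod fun i k => a i ^ k := by
  rw [eval_coeffMap_eq R D a hD0 (monomial m c) {m} support_monomial_subset,
    Finset.sum_singleton, coeff_monomial, if_pos rfl]

lemma E_mul (hD0 : D 0 = 0) (hDadd : ∀ x y : R, D (x + y) = D x + D y)
    (hDmul : ∀ x y : R, D (x * y) = D x * (y : S) + (x : S) * D y)
    (f g : MvPolynomial (Fin n) R) :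
    eval a (coeffMap D (f * g)) =
      eval₂ R.subtype a f * eval a (coeffMap D g)
        + eval₂ R.subtype a g * eval a (coeffMap D f) := by
  induction f using MvPolynomial.induction_on' with
  | add p q hp hq =>
    rw [add_mul, E_add R D a hD0 hDadd, hp, hq, eval₂_add, E_add R D a hD0 hDadd]
    ring
  | monomial m c =>
    induction g using MvPolynomial.induction_on' with
    | add p q hp hq =>
      rw [mul_add, E_add R D a hD0 hDadd, hp, hq, eval₂_add, E_add R D a hD0 hDadd]
      ring
    | monomial m' c' =>
      rw [monomial_mul, E_monomial R D a hD0, E_monomial R D a hD0,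
        E_monomial R D a hD0, eval₂_monomial, eval₂_monomial, hDmul,
        Finsupp.prod_add_index' (fun i => pow_zero (a i)) (fun i k l => pow_add (a i) k l)]
      simp only [Subring.coe_subtype]
      ring

lemma tau_add (hD0 : D 0 = 0) (hDadd : ∀ x y : R, D (x + y) = D x + D y)
    (f g : MvPolynomial (Fin n) R) :
    tauEval R D (f + g) a b = tauEval R D f a b + tauEval R D g a b := by
  simp only [tauEval, map_add, eval₂_add, add_mul, Finset.sum_add_distrib,
    E_add R D a hD0 hDadd]
  ring

lemma tau_zero (hD0 : D 0 = 0) : tauEval R D 0 a b = 0 := by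
  have h0 : eval a (coeffMap D (0 : MvPolynomial (Fin n) R)) = 0 := by
    rw [eval_coeffMap_eq R D a hD0 0 ∅ (by simp), Finset.sum_empty]
  simp [tauEval, h0]

lemma tau_mul (hD0 : D 0 = 0) (hDadd : ∀ x y : R, D (x + y) = D x + D y)
    (hDmul : ∀ x y : R, D (x * y) = D x * (y : S) + (x : S) * D y)
    (f g : MvPolynomial (Fin n) R) :
    tauEval R D (f * g) a b =
      eval₂ R.subtype a f * tauEval R D g a b
        + eval₂ R.subtype a g * tauEval R D f a b := by
  simp only [tauEval]
  rw [E_mul R D a hD0 hDadd hDmul]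
  have hp : ∀ i : Fin n, eval₂ R.subtype a (pderiv i (f * g)) * b i =
      eval₂ R.subtype a f * (eval₂ R.subtype a (pderiv i g) * b i)
        + eval₂ R.subtype a g * (eval₂ R.subtype a (pderiv i f) * b i) := by
    intro i
    rw [pderiv_mul, eval₂_add, eval₂_mul, eval₂_mul]
    ring
  rw [Finset.sum_congr rfl fun i _ => hp i, Finset.sum_add_distrib,
    ← Finset.mul_sum, ← Finset.mul_sum]
  ring

lemma tau_C (hD0 : D 0 = 0) (r : R) : tauEval R D (C r) a b = D r := by
  have h1 : ∀ i : Fin n, eval₂ R.subtype a (pderiv i (C r : MvPolynomial (Fin n) R)) * b i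
      = 0 := by
    intro i; rw [pderiv_C, eval₂_zero, zero_mul]
  rw [tauEval, Finset.sum_congr rfl fun i _ => h1 i, Finset.sum_const_zero, zero_add]
  rw [show (C r : MvPolynomial (Fin n) R) = monomial 0 r from rfl,
    E_monomial R D a hD0, Finsupp.prod_zero_index, mul_one]

lemma tau_X (hD0 : D 0 = 0) (hD1 : D 1 = 0) (i : Fin n) :
    tauEval R D (X i) a b = b i := by
  rw [tauEval]
  have hE : eval a (coeffMap D (X i : MvPolynomial (Fin n) R)) = 0 := by
    rw [show (X i : MvPolynomial (Fin n) R) = monomial (Finsupp.single i 1) 1 from rfl,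
      E_monomial R D a hD0, hD1, zero_mul]
  rw [hE, add_zero]
  rw [Finset.sum_eq_single i]
  · rw [pderiv_X_self, eval₂_one, one_mul]
  · intro j _ hj
    rw [pderiv_X_of_ne (Ne.symm hj), eval₂_zero, zero_mul]
  · intro h; exact absurd (Finset.mem_univ i) h

end Aux

/-- Extension of a derivation along a point of the prolongation: if `A` generates the
vanishing ideal of `a` over `R` and `τ(g)(a,b) = 0` for all `g ∈ A`, then there is a
unique derivation `D' : R[a] → S` extending `D` with `D' aᵢ = bᵢ`. -/
theorem stmt8 {S : Type*} [CommRing S] (R : Subring S) {n : ℕ}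
    (D : R → S)
    (hDadd : ∀ x y : R, D (x + y) = D x + D y)
    (hDmul : ∀ x y : R, D (x * y) = D x * (y : S) + (x : S) * D y)
    (a b : Fin n → S)
    (A : Set (MvPolynomial (Fin n) R))
    (hA : Ideal.span A = RingHom.ker (eval₂Hom R.subtype a))
    (hb : ∀ g ∈ A, tauEval R D g a b = 0) :
    ∃! D' : Subring.closure ((R : Set S) ∪ Set.range a) → S,
      (∀ x y, D' (x + y) = D' x + D' y) ∧
      (∀ x y, D' (x * y) = D' x * (y : S) + (x : S) * D' y) ∧
      (∀ r : R, D' ⟨(r : S), Subring.subset_closure (Or.inl r.2)⟩ = D r) ∧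
      (∀ i, D' ⟨a i, Subring.subset_closure (Or.inr ⟨i, rfl⟩)⟩ = b i) := by
  classical
  have hD0 : D 0 = 0 := by
    have h := hDadd 0 0
    rw [add_zero] at h
    exact (left_eq_add.mp h)
  have hD1 : D 1 = 0 := by
    have h := hDmul 1 1
    rw [mul_one] at h
    simp only [OneMemClass.coe_one, mul_one, one_mul] at h
    exact (left_eq_add.mp h)
  -- tau vanishes on the kernel
  have tker : ∀ f : MvPolynomial (Fin n) R, eval₂Hom R.subtype a f = 0 →
      tauEval R D f a b = 0 := by
    intro f hf
    have hfmem : f ∈ Ideal.span A := by rw [hA]; exact hf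
    have : tauEval R D f a b = 0 ∧ eval₂Hom R.subtype a f = 0 := by
      refine Submodule.span_induction
        (p := fun g _ => tauEval R D g a b = 0 ∧ eval₂Hom R.subtype a g = 0)
        ?_ ?_ ?_ ?_ hfmem
      · intro g hg
        refine ⟨hb g hg, ?_⟩
        have : g ∈ Ideal.span A := Ideal.subset_span hg
        rw [hA] at this
        exact this
      · exact ⟨tau_zero R D a b hD0, map_zero _⟩
      · intro x y _ _ hx hy
        exact ⟨by rw [tau_add R D a b hD0 hDadd, hx.1, hy.1, add_zero],
          by rw [map_add, hx.2, hy.2, add_zero]⟩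
      · intro p g _ hg
        rw [smul_eq_mul]
        refine ⟨?_, by rw [map_mul, hg.2, mul_zero]⟩
        rw [tau_mul R D a b hD0 hDadd hDmul, hg.1, mul_zero, zero_add]
        have : eval₂ R.subtype a g = 0 := hg.2
        rw [this, zero_mul]
    exact this.1
  have tsub : ∀ f g : MvPolynomial (Fin n) R,
      tauEval R D (f - g) a b = tauEval R D f a b - tauEval R D g a b := by
    intro f g
    have h := tau_add R D a b hD0 hDadd (f - g) g
    rw [sub_add_cancel] at h
    exact eq_sub_of_add_eq h.symm
  -- surjectivity of evaluation onto the closure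
  have hsurj : ∀ x : Subring.closure ((R : Set S) ∪ Set.range a),
      ∃ f : MvPolynomial (Fin n) R, eval₂Hom R.subtype a f = (x : S) := by
    intro x
    have hle : Subring.closure ((R : Set S) ∪ Set.range a) ≤ (eval₂Hom R.subtype a).range := by
      rw [Subring.closure_le]
      rintro y (hy | ⟨i, rfl⟩)
      · exact ⟨C ⟨y, hy⟩, by simp⟩
      · exact ⟨X i, by simp⟩
    exact RingHom.mem_range.mp (hle x.2)
  choose F hF using hsurj
  -- key: the value does not depend on the chosen representative
  have key : ∀ (x : Subring.closure ((R : Set S) ∪ Set.range a))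
      (f : MvPolynomial (Fin n) R), eval₂Hom R.subtype a f = (x : S) →
      tauEval R D (F x) a b = tauEval R D f a b := by
    intro x f hf
    have h0 : eval₂Hom R.subtype a (F x - f) = 0 := by
      rw [map_sub, hF, hf, sub_self]
    have := tker _ h0
    rw [tsub] at this
    exact sub_eq_zero.mp this
  refine ⟨fun x => tauEval R D (F x) a b, ⟨?_, ?_, ?_, ?_⟩, ?_⟩
  · -- additivity
    intro x y
    show tauEval R D (F (x + y)) a b = tauEval R D (F x) a b + tauEval R D (F y) a b
    have hxy : eval₂Hom R.subtype a (F x + F y) = ((x + y : _) : S) := by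
      rw [map_add, hF, hF]; rfl
    rw [key (x + y) (F x + F y) hxy, tau_add R D a b hD0 hDadd]
  · -- Leibniz
    intro x y
    show tauEval R D (F (x * y)) a b = tauEval R D (F x) a b * (y : S) + (x : S) * tauEval R D (F y) a b
    have hxy : eval₂Hom R.subtype a (F x * F y) = ((x * y : _) : S) := by
      rw [map_mul, hF, hF]; rfl
    rw [key (x * y) (F x * F y) hxy, tau_mul R D a b hD0 hDadd hDmul]
    have hx : eval₂ R.subtype a (F x) = (x : S) := hF x
    have hy : eval₂ R.subtype a (F y) = (y : S) := hF y
    rw [hx, hy]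
    ring
  · -- extends D
    intro r
    show tauEval R D (F _) a b = D r
    have hc : eval₂Hom R.subtype a (C r : MvPolynomial (Fin n) R) = (r : S) := by simp
    rw [key _ (C r) hc, tau_C R D a b hD0]
  · -- value at a i
    intro i
    show tauEval R D (F _) a b = b i
    have hx : eval₂Hom R.subtype a (X i : MvPolynomial (Fin n) R) = a i := by simp
    rw [key _ (X i) hx, tau_X R D a b hD0 hD1]
  · -- uniqueness
    rintro D' ⟨h1, h2, h3, h4⟩
    funext x
    obtain ⟨x, hx⟩ := x
    -- both sides satisfy the same characterizing properties; prove equality by induction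
    set D₂ : Subring.closure ((R : Set S) ∪ Set.range a) → S :=
      fun x => tauEval R D (F x) a b with hD₂
    have g1 : ∀ x y, D₂ (x + y) = D₂ x + D₂ y := by
      intro x y
      have hxy : eval₂Hom R.subtype a (F x + F y) = ((x + y : _) : S) := by
        rw [map_add, hF, hF]; rfl
      simp only [hD₂]
      rw [key (x + y) (F x + F y) hxy, tau_add R D a b hD0 hDadd]
    have g2 : ∀ x y, D₂ (x * y) = D₂ x * (y : S) + (x : S) * D₂ y := by
      intro x y
      have hxy : eval₂Hom R.subtype a (F x * F y) = ((x * y : _) : S) := by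
        rw [map_mul, hF, hF]; rfl
      simp only [hD₂]
      rw [key (x * y) (F x * F y) hxy, tau_mul R D a b hD0 hDadd hDmul]
      have hx : eval₂ R.subtype a (F x) = (x : S) := hF x
      have hy : eval₂ R.subtype a (F y) = (y : S) := hF y
      rw [hx, hy]; ring
    have g3 : ∀ r : R, D₂ ⟨(r : S), Subring.subset_closure (Or.inl r.2)⟩ = D r := by
      intro r
      have hc : eval₂Hom R.subtype a (C r : MvPolynomial (Fin n) R) = (r : S) := by simp
      simp only [hD₂]
      rw [key _ (C r) hc, tau_C R D a b hD0]
    have g4 : ∀ i, D₂ ⟨a i, Subring.subset_closure (Or.inr ⟨i, rfl⟩)⟩ = b i := by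
      intro i
      have hxi : eval₂Hom R.subtype a (X i : MvPolynomial (Fin n) R) = a i := by simp
      simp only [hD₂]
      rw [key _ (X i) hxi, tau_X R D a b hD0 hD1]
    -- generic equality of two "derivations" agreeing on generators
    have zero1 : D' 0 = D 0 := by
      have := h3 0
      convert this using 2
      exact Subtype.ext rfl
    have zero2 : D₂ 0 = D 0 := by
      have := g3 0
      convert this using 2
      exact Subtype.ext rfl
    refine Subring.closure_induction
      (p := fun y hy => D' ⟨y, hy⟩ = D₂ ⟨y, hy⟩) ?_ ?_ ?_ ?_ ?_ ?_ hx
    · rintro y (hy | ⟨i, rfl⟩)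
      · exact (h3 ⟨y, hy⟩).trans (g3 ⟨y, hy⟩).symm
      · exact (h4 i).trans (g4 i).symm
    · exact zero1.trans zero2.symm
    · exact (h3 1).trans (g3 1).symm
    · intro u v hu hv ihu ihv
      have : (⟨u + v, add_mem hu hv⟩ : Subring.closure ((R : Set S) ∪ Set.range a))
          = ⟨u, hu⟩ + ⟨v, hv⟩ := rfl
      rw [this, h1, g1, ihu, ihv]
    · intro u hu ihu
      have huv : (⟨u, hu⟩ : Subring.closure ((R : Set S) ∪ Set.range a))
          + ⟨-u, neg_mem hu⟩ = 0 := Subtype.ext (by simp)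
      have e1 : D' ⟨u, hu⟩ + D' ⟨-u, neg_mem hu⟩ = D 0 := by
        rw [← h1, huv, zero1]
      have e2 : D₂ ⟨u, hu⟩ + D₂ ⟨-u, neg_mem hu⟩ = D 0 := by
        rw [← g1, huv, zero2]
      have h5 : D' ⟨-u, neg_mem hu⟩ = D 0 - D' ⟨u, hu⟩ := eq_sub_of_add_eq' e1
      have h6 : D₂ ⟨-u, neg_mem hu⟩ = D 0 - D₂ ⟨u, hu⟩ := eq_sub_of_add_eq' e2
      rw [h5, h6, ihu]
    · intro u v hu hv ihu ihv
      have : (⟨u * v, mul_mem hu hv⟩ : Subring.closure ((R : Set S) ∪ Set.range a))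
          = ⟨u, hu⟩ * ⟨v, hv⟩ := rfl
      rw [this, h2, g2, ihu, ihv]
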